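/- Let A = H₁ ⊗ B for a Poisson algebra B. Then every bracket cyclic cocycle on A vanishes: if a skew-symmetric bilinear form (·|·) on A satisfies (ab|c) + (bc|a) + (ac|b) = 0 and ([a,b]|c) = (a'|bc) − (b'|ac) (where x' = [x,1] = 0 for Poisson brackets), then (·|·) = 0. -/

import Mathlib

open MvPolynomial

/-- The Poisson bracket on `A = H₁ ⊗ B`, modelled as polynomials `B[p,q]` over the Poisson
algebra `B`. -/
noncomputable def tensorBracket {F B : Type*} [Field F] [CommRing B] [Algebra F B]
    (brB : B →ₗ[F] B →ₗ[F] B) (f g : MvPolynomial (Fin 2) B) : MvPolynomial (Fin 2) B :=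
  pderiv 0 f * pderiv 1 g - pderiv 1 f * pderiv 0 g +
    ∑ m ∈ f.support, ∑ n ∈ g.support, monomial (m + n) (brB (coeff m f) (coeff n g))

set_option linter.unusedSectionVars false

section Aux

variable {F B : Type*} [Field F] [CharZero F] [CommRing B] [Algebra F B]
  (brB : B →ₗ[F] B →ₗ[F] B)

lemma brB_one_left (hleib : ∀ a b c : B, brB (a * b) c = a * brB b c + brB a c * b)
    (c : B) : brB 1 c = 0 := by
  simpa using hleib 1 1 c

lemma brB_skew (halt : ∀ a : B, brB a a = 0) (a b : B) : brB a b = - brB b a := by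
  have h := halt (a + b)
  simp only [map_add, LinearMap.add_apply, halt] at h
  linear_combination h

lemma brB_one_right (halt : ∀ a : B, brB a a = 0)
    (hleib : ∀ a b c : B, brB (a * b) c = a * brB b c + brB a c * b)
    (c : B) : brB c 1 = 0 := by
  rw [brB_skew brB halt, brB_one_left brB hleib, neg_zero]

lemma tb_one_right (halt : ∀ a : B, brB a a = 0)
    (hleib : ∀ a b c : B, brB (a * b) c = a * brB b c + brB a c * b)
    (f : MvPolynomial (Fin 2) B) : tensorBracket brB f 1 = 0 := by
  unfold tensorBracket
  have h1 : pderiv (R := B) (σ := Fin 2) 0 1 = 0 := by simp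
  have h2 : pderiv (R := B) (σ := Fin 2) 1 1 = 0 := by simp
  rw [h1, h2, mul_zero, mul_zero, sub_zero, zero_add]
  apply Finset.sum_eq_zero
  intro m _
  apply Finset.sum_eq_zero
  intro n _
  rw [coeff_one]
  split
  · rw [brB_one_right brB halt hleib, map_zero]
  · simp

lemma tb_X0 (hleib : ∀ a b c : B, brB (a * b) c = a * brB b c + brB a c * b)
    (g : MvPolynomial (Fin 2) B) : tensorBracket brB (X 0) g = pderiv 1 g := by
  unfold tensorBracket
  have hsum : ∑ m ∈ (X (R := B) (0 : Fin 2)).support, ∑ n ∈ g.support,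
      (monomial (m + n)) (brB (coeff m (X 0)) (coeff n g)) = 0 := by
    apply Finset.sum_eq_zero
    intro m _
    apply Finset.sum_eq_zero
    intro n _
    rw [coeff_X']
    split
    · rw [brB_one_left brB hleib, map_zero]
    · simp
  rw [hsum, add_zero]
  simp [pderiv_X]

lemma antideriv (F : Type*) [Field F] [CharZero F] {B : Type*} [CommRing B] [Algebra F B]
    (f : MvPolynomial (Fin 2) B) :
    ∃ g : MvPolynomial (Fin 2) B, pderiv 1 g = f := by
  induction f using MvPolynomial.induction_on' with
  | monomial u a =>
    refine ⟨monomial (u + Finsupp.single 1 1) (((u 1 + 1 : ℕ) : F)⁻¹ • a), ?_⟩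
    rw [pderiv_monomial]
    have h1 : (u + Finsupp.single (1 : Fin 2) 1) - Finsupp.single 1 1 = u := by
      simp
    have h2 : ((u + Finsupp.single (1 : Fin 2) 1) : Fin 2 →₀ ℕ) 1 = u 1 + 1 := by
      simp [Finsupp.add_apply]
    rw [h1, h2]
    congr 1
    have hne : ((u 1 + 1 : ℕ) : F) ≠ 0 := by exact Nat.cast_ne_zero.mpr (Nat.succ_ne_zero (u 1))
    calc (((u 1 + 1 : ℕ) : F)⁻¹ • a) * ((u 1 + 1 : ℕ) : B)
        = ((u 1 + 1 : ℕ) : B) * (((u 1 + 1 : ℕ) : F)⁻¹ • a) := by ring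
      _ = (u 1 + 1 : ℕ) • (((u 1 + 1 : ℕ) : F)⁻¹ • a) := by
          rw [nsmul_eq_mul]
      _ = ((u 1 + 1 : ℕ) : F) • (((u 1 + 1 : ℕ) : F)⁻¹ • a) := by
          rw [Nat.cast_smul_eq_nsmul]
      _ = a := by rw [smul_smul, mul_inv_cancel₀ hne, one_smul]
  | add p q hp hq =>
    obtain ⟨gp, hgp⟩ := hp
    obtain ⟨gq, hgq⟩ := hq
    exact ⟨gp + gq, by rw [map_add, hgp, hgq]⟩

end Aux



/-- every bracket cyclic cocycle on `A = H₁ ⊗ B` vanishes. -/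
theorem stmt17 (F : Type*) [Field F] [CharZero F]
    (B : Type*) [CommRing B] [Algebra F B]
    (brB : B →ₗ[F] B →ₗ[F] B)
    -- `[·,·]` is a Poisson bracket on `B`
    (halt : ∀ a : B, brB a a = 0)
    (hjac : ∀ a b c : B, brB (brB a b) c + brB (brB b c) a + brB (brB c a) b = 0)
    (hleib : ∀ a b c : B, brB (a * b) c = a * brB b c + brB a c * b)
    -- a bracket cyclic cocycle on `A = H₁ ⊗ B`
    (φ : MvPolynomial (Fin 2) B →ₗ[F] MvPolynomial (Fin 2) B →ₗ[F] F)
    (hskew : ∀ a b, φ a b = - φ b a)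
    (hcyc : ∀ a b c, φ (a * b) c + φ (b * c) a + φ (a * c) b = 0)
    -- `([a,b]|c) = (a'|bc) - (b'|ac)` where `x' = [x,1]`
    (hbr : ∀ a b c, φ (tensorBracket brB a b) c
      = φ (tensorBracket brB a 1) (b * c) - φ (tensorBracket brB b 1) (a * c)) :
    ∀ a b, φ a b = 0 := by

  intro a b
  obtain ⟨g, hg⟩ := antideriv F a
  have := hbr (X 0) g b
  rw [tb_X0 brB hleib, hg, tb_one_right brB halt hleib, tb_one_right brB halt hleib] at this
  simpa using this
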